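/- Let p be a prime, let k be a field of characteristic p, and let n be an integer with 1 ≤ n ≤ p − 1. Then the rational function 1/(x^{n+1} · (x^{p−n} − 1)^{n+1}) is exact. -/

import Mathlib

open Polynomial


/-- coefficients of the antiderivative numerator -/
noncomputable def cc (k : Type*) [Field k] (n : ℕ) : ℕ → k
  | 0 => (n : k)⁻¹
  | j + 1 => cc k n j * (((j : k) + 1) - (n : k)) * ((j : k) + 2)⁻¹

/-- telescoping auxiliary -/
noncomputable def FF (k : Type*) [Field k] (n m : ℕ) : ℕ → Polynomial k
  | 0 => -1
  | j + 1 => Polynomial.C ((n : k) * cc k n j * ((n : k) - 1 - (j : k))) *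
      Polynomial.X ^ ((j + 1) * m)

lemma cast_ne_zero_of_lt {k : Type*} [Field k] (p : ℕ) [CharP k p] {a : ℕ}
    (h0 : 0 < a) (h1 : a < p) : (a : k) ≠ 0 := by
  rw [Ne, CharP.cast_eq_zero_iff k p]
  intro hd
  exact absurd (Nat.le_of_dvd h0 hd) (by omega)

lemma key {k : Type*} [Field k] (p : ℕ) (hp : p.Prime) [CharP k p]
    (n : ℕ) (hn : 1 ≤ n) (hnp : n ≤ p - 1) :
    derivative (∑ j ∈ Finset.range n, C (cc k n j) * X ^ (j * (p - n)))
        * (X ^ (p - n + 1) - X)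
      - C (n : k) * ((∑ j ∈ Finset.range n, C (cc k n j) * X ^ (j * (p - n)))
        * derivative (X ^ (p - n + 1) - X)) = 1 := by
  set m := p - n with hm
  have hp2 : 2 ≤ p := hp.two_le
  have hm1 : 1 ≤ m := by omega
  have hmn : m + n = p := by omega
  have hcastp : ((p : ℕ) : k) = 0 := CharP.cast_eq_zero k p
  have hmk : (m : k) = -(n : k) := by
    have h0 : (m : k) + (n : k) = 0 := by
      rw [← Nat.cast_add, hmn, hcastp]
    linear_combination h0
  have hnk : (n : k) ≠ 0 := cast_ne_zero_of_lt p hn (by omega)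
  have hc1 : (n : k) * (n : k)⁻¹ = 1 := mul_inv_cancel₀ hnk
  -- derivative of w
  have hw' : derivative (X ^ (m + 1) - X : k[X]) = C ((m : k) + 1) * X ^ m - 1 := by
    rw [derivative_sub, derivative_X_pow, derivative_X]
    push_cast
    simp
  -- per-term identity
  have hterm : ∀ j ∈ Finset.range n,
      derivative (C (cc k n j) * X ^ (j * m)) * (X ^ (m + 1) - X)
        - C (n : k) * (C (cc k n j) * X ^ (j * m) * derivative (X ^ (m + 1) - X))
      = FF k n m (j + 1) - FF k n m j := by
    intro j hj
    rw [Finset.mem_range] at hj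
    rcases j with _ | i
    · -- j = 0
      have hc0 : cc k n 0 = (n : k)⁻¹ := rfl
      simp only [FF, hw', Nat.zero_mul, pow_zero, mul_one, hc0, derivative_C, zero_mul,
        zero_sub, Nat.cast_zero, one_mul, sub_zero, sub_neg_eq_add]
      rw [← mul_assoc, ← C_mul, hc1, C_1, one_mul, hmk]
      rw [show (-(n:k)+1) = -((n:k)-1) by ring, C_neg, show (0+1)*m = m by ring, one_mul]
      ring
    · -- j = i + 1
      have hi2 : ((i : k) + 2) ≠ 0 := by
        have : ((i + 2 : ℕ) : k) ≠ 0 := cast_ne_zero_of_lt p (by omega) (by omega)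
        push_cast at this; exact this
      have hrec : ((i : k) + 2) * cc k n (i + 1) = cc k n i * (((i : k) + 1) - (n : k)) := by
        show ((i : k) + 2) * (cc k n i * (((i : k) + 1) - (n : k)) * ((i : k) + 2)⁻¹) = _
        field_simp
      have he : 1 ≤ (i + 1) * m := Nat.mul_pos (by omega) (by omega)
      have hsplit : (i + 2) * m = (i + 1) * m + m := by ring
      obtain ⟨e, he'⟩ : ∃ e, (i + 1) * m = e + 1 := ⟨(i + 1) * m - 1, by omega⟩
      have h2 : (i + 2) * m = e + 1 + m := by omega
      have hcast : (((i + 1) * m : ℕ) : k) = -(((i : k) + 1) * (n : k)) := by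
        push_cast [hmk]; ring
      rw [derivative_C_mul, derivative_X_pow, hw', hcast, hmk]
      simp only [FF, he', h2, Nat.add_sub_cancel]
      have hrecC : ((C (i : k) : k[X]) + 2) * C (cc k n (i + 1))
          = C (cc k n i) * ((C (i : k) + 1) - C (n : k)) := by
        have h := congrArg C hrec
        simp only [C_mul, C_sub, C_add, C_1] at h
        convert h using 2 <;> simp [C_add, C_1] <;> exact (map_ofNat C 2).symm
      have hci : ((i + 1 : ℕ) : k) = (i : k) + 1 := by push_cast; ring
      rw [hci]
      simp only [C_mul, C_sub, C_add, C_neg, C_1]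
      linear_combination (C (n : k) * (X : k[X]) ^ (e + 1)) * hrecC
  -- sum it up
  rw [derivative_sum, Finset.sum_mul, Finset.sum_mul, Finset.mul_sum,
    ← Finset.sum_sub_distrib, Finset.sum_congr rfl hterm, Finset.sum_range_sub (FF k n m)]
  have hFn : FF k n m n = 0 := by
    obtain ⟨n', rfl⟩ : ∃ n', n = n' + 1 := ⟨n - 1, by omega⟩
    show C ((↑(n'+1) : k) * cc k (n'+1) n' * ((↑(n'+1) : k) - 1 - (n' : k))) * X ^ ((n'+1) * m) = 0
    have : ((↑(n'+1) : k) - 1 - (n' : k)) = 0 := by push_cast; ring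
    rw [this, mul_zero, C_0, zero_mul]
  rw [hFn]
  show (0 : k[X]) - FF k n m 0 = 1
  show (0 : k[X]) - (-1) = 1
  ring

/-- `HasDerivRF f g` means `g` is the formal derivative of the rational function `f` in `k(x)`:
if `f = u / v` with `v ≠ 0`, then `g = (u' v - u v') / v ^ 2`. -/
def HasDerivRF {k : Type*} [Field k] (f g : RatFunc k) : Prop :=
  ∃ u v : Polynomial k, v ≠ 0 ∧
    f = algebraMap (Polynomial k) (RatFunc k) u / algebraMap (Polynomial k) (RatFunc k) v ∧
    g = algebraMap (Polynomial k) (RatFunc k)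
          (Polynomial.derivative u * v - u * Polynomial.derivative v) /
        algebraMap (Polynomial k) (RatFunc k) (v ^ 2)

/-- A rational function is exact if it is the formal derivative of some rational function. -/
def IsExactRF {k : Type*} [Field k] (g : RatFunc k) : Prop := ∃ f : RatFunc k, HasDerivRF f g

/-- For `1 ≤ n ≤ p - 1` over a field of characteristic `p`, the rational function
`1/(x^{n+1} (x^{p-n} - 1)^{n+1})` is exact. -/
theorem stmt6 {k : Type*} [Field k] (p : ℕ) (hp : p.Prime) [CharP k p]
    (n : ℕ) (hn : 1 ≤ n) (hnp : n ≤ p - 1) :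
    IsExactRF ((RatFunc.X ^ (n + 1) * (RatFunc.X ^ (p - n) - 1) ^ (n + 1))⁻¹ : RatFunc k) := by
  classical
  set m := p - n with hm
  have hp2 : 2 ≤ p := hp.two_le
  have hm1 : 1 ≤ m := by omega
  set w : k[X] := X ^ (m + 1) - X with hwdef
  set u : k[X] := ∑ j ∈ Finset.range n, C (cc k n j) * X ^ (j * m) with hudef
  have hwne : w ≠ 0 := by
    have hne : (X : k[X]) ^ (m + 1) ≠ X := by
      intro h
      have := congrArg natDegree h
      rw [natDegree_X_pow, natDegree_X] at this
      omega
    exact sub_ne_zero.mpr hne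
  have hvne : w ^ n ≠ 0 := pow_ne_zero _ hwne
  refine ⟨algebraMap k[X] (RatFunc k) u / algebraMap k[X] (RatFunc k) (w ^ n),
    u, w ^ n, hvne, rfl, ?_⟩
  -- key identity
  have hkey : derivative u * w - C (n : k) * (u * derivative w) = 1 :=
    key p hp n hn hnp
  -- derivative of w^n
  have hdpow : derivative (w ^ n) = C (n : k) * w ^ (n - 1) * derivative w :=
    derivative_pow w n
  have hnum : derivative u * w ^ n - u * derivative (w ^ n) = w ^ (n - 1) := by
    rw [hdpow]
    have hwn : w ^ n = w ^ (n - 1) * w := by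
      rw [← pow_succ]
      congr 1
      omega
    calc derivative u * w ^ n - u * (C (n : k) * w ^ (n - 1) * derivative w)
        = w ^ (n - 1) * (derivative u * w - C (n : k) * (u * derivative w)) := by
          rw [hwn]; ring
      _ = w ^ (n - 1) := by rw [hkey, mul_one]
  rw [hnum]
  -- target rewriting
  have hWX : (RatFunc.X : RatFunc k) ^ (n + 1) * (RatFunc.X ^ m - 1) ^ (n + 1)
      = algebraMap k[X] (RatFunc k) (w ^ (n + 1)) := by
    rw [hwdef]
    have : (X ^ (m + 1) - X : k[X]) = X * (X ^ m - 1) := by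
      rw [mul_sub, mul_one, ← pow_succ']
    rw [this, mul_pow, map_mul, map_pow, map_pow, map_sub, map_pow, map_one,
      RatFunc.algebraMap_X]
  rw [hWX]
  set W : RatFunc k := algebraMap k[X] (RatFunc k) w with hW
  have hWne : W ≠ 0 := by
    rw [hW, Ne, map_eq_zero_iff _ (RatFunc.algebraMap_injective k)]
    exact hwne
  rw [map_pow, map_pow, map_pow, map_pow, ← pow_mul]
  have hpow : (algebraMap k[X] (RatFunc k) w) ^ (n * 2)
      = (algebraMap k[X] (RatFunc k) w) ^ (n + 1) * (algebraMap k[X] (RatFunc k) w) ^ (n - 1) := by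
    rw [← pow_add]
    congr 1
    omega
  rw [eq_div_iff (pow_ne_zero _ hWne), hpow, ← mul_assoc,
    inv_mul_cancel₀ (pow_ne_zero _ hWne), one_mul]
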